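/- Let X_n be the sum of all reduced words of length n in F_2 = ⟨a,b⟩ and let E: C[F_2] → C[⟨h⟩] extract the components along powers of h = aba^{-1}b^{-1}. Then E(X_n) = h^{n/4} + h^{-n/4} if 4 divides n and n ≥ 4, and E(X_n) = 0 if n ≥ 1 and 4 does not divide n. -/

import Mathlib

/-- The sum of all reduced words of length `n` in the complex group algebra of the
free group on `N` generators. -/
noncomputable def Xw (N : ℕ) (n : ℕ) : MonoidAlgebra ℂ (FreeGroup (Fin N)) :=
  ∑ᶠ g ∈ {g : FreeGroup (Fin N) | (FreeGroup.toWord g).length = n}, MonoidAlgebra.single g (1:ℂ)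

private lemma reduce_eq_self {L : List (Fin 2 × Bool)}
    (hL : L.IsChain fun p q => ¬(p.1 = q.1 ∧ p.2 = !q.2)) : FreeGroup.reduce L = L := by
  induction L with
  | nil => rfl
  | cons x L ih =>
    rw [FreeGroup.reduce.cons, ih hL.tail]
    cases L with
    | nil => rfl
    | cons y tl =>
      have hxy := (List.isChain_cons_cons.1 hL).1
      simp only [if_neg hxy]

private abbrev hw : List (Fin 2 × Bool) :=
  [((0 : Fin 2), true), ((1 : Fin 2), true), ((0 : Fin 2), false), ((1 : Fin 2), false)]

private lemma chain_flatten (k : ℕ) :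
    ((List.replicate k hw).flatten).IsChain fun p q => ¬(p.1 = q.1 ∧ p.2 = !q.2) := by
  induction k with
  | zero => simp
  | succ k ih =>
    rw [List.replicate_succ, List.flatten_cons]
    rw [List.isChain_append]
    refine ⟨by simp [List.isChain_cons_cons], ih, ?_⟩
    intro x hx y hy
    simp at hx
    cases k with
    | zero => simp at hy
    | succ k =>
      rw [List.replicate_succ, List.flatten_cons] at hy
      simp at hy
      subst hx hy
      simp

private lemma toWord_pow (h : FreeGroup (Fin 2))
    (hh : h = FreeGroup.of 0 * FreeGroup.of 1 * (FreeGroup.of 0)⁻¹ * (FreeGroup.of 1)⁻¹)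
    (k : ℕ) : (h ^ k).toWord = (List.replicate k hw).flatten := by
  have hmk : h = FreeGroup.mk hw := by
    rw [hh]
    simp only [FreeGroup.of, FreeGroup.inv_mk, FreeGroup.mul_mk, FreeGroup.invRev]
    rfl
  rw [hmk, FreeGroup.pow_mk, FreeGroup.toWord_mk, reduce_eq_self (chain_flatten k)]

private lemma length_zpow (h : FreeGroup (Fin 2))
    (hh : h = FreeGroup.of 0 * FreeGroup.of 1 * (FreeGroup.of 0)⁻¹ * (FreeGroup.of 1)⁻¹)
    (m : ℤ) : ((h ^ m).toWord).length = 4 * m.natAbs := by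
  obtain ⟨k, rfl | rfl⟩ := Int.eq_nat_or_neg m
  · rw [zpow_natCast, toWord_pow h hh]
    simp [List.length_flatten, mul_comm]
  · rw [zpow_neg, zpow_natCast, FreeGroup.toWord_inv, FreeGroup.invRev_length,
      toWord_pow h hh]
    simp [List.length_flatten, mul_comm]

private lemma Xw_apply (n : ℕ) (g : FreeGroup (Fin 2)) :
    (Xw 2 n).coeff g = if (FreeGroup.toWord g).length = n then 1 else 0 := by
  have hfin : {g : FreeGroup (Fin 2) | (FreeGroup.toWord g).length = n}.Finite :=
    (List.finite_length_eq _ n).preimage FreeGroup.toWord_injective.injOn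
  rw [Xw, ← hfin.coe_toFinset, finsum_mem_coe_finset]
  classical
  rw [show ((∑ i ∈ hfin.toFinset, MonoidAlgebra.single i (1:ℂ)).coeff g)
      = ∑ i ∈ hfin.toFinset, (MonoidAlgebra.single i (1:ℂ)).coeff g from by
        rw [MonoidAlgebra.coeff_sum]; exact Finset.sum_apply' g]
  simp only [MonoidAlgebra.single_apply]
  rw [Finset.sum_ite_eq' hfin.toFinset g fun _ => (1:ℂ)]
  simp [Set.Finite.mem_toFinset]

/-- With `E : ℂ[F₂] → ℂ[⟨h⟩]` extracting the `h`-power components (`h = aba⁻¹b⁻¹`):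
`E(Xₙ) = h^{n/4} + h^{-n/4}` if `4 ∣ n`, `n ≥ 4`, and `E(Xₙ) = 0` for `n ≥ 1` with
`4 ∤ n`; stated via the coefficients of `Xₙ` at the powers of `h`. -/
theorem stmt_11
    (h : FreeGroup (Fin 2))
    (hh : h = FreeGroup.of 0 * FreeGroup.of 1 * (FreeGroup.of 0)⁻¹ * (FreeGroup.of 1)⁻¹) :
    (∀ n : ℕ, 4 ∣ n → 4 ≤ n → ∀ m : ℤ,
      (Xw 2 n).coeff (h ^ m) = if m = ((n / 4 : ℕ) : ℤ) ∨ m = -((n / 4 : ℕ) : ℤ) then 1 else 0) ∧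
    (∀ n : ℕ, 1 ≤ n → ¬ (4 ∣ n) → ∀ m : ℤ, (Xw 2 n).coeff (h ^ m) = 0) := by
  constructor
  · intro n hdvd _ m
    rw [Xw_apply, length_zpow h hh]
    obtain ⟨q, rfl⟩ := hdvd
    have hq : (4 * q) / 4 = q := Nat.mul_div_cancel_left q (by norm_num)
    rw [hq]
    refine if_congr ?_ rfl rfl
    rw [mul_right_inj' (by norm_num : (4:ℕ) ≠ 0)]
    exact Int.natAbs_eq_iff
  · intro n _ hndvd m
    rw [Xw_apply, length_zpow h hh, if_neg]
    intro hc
    exact hndvd ⟨m.natAbs, hc.symm⟩
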